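/- arXiv:2401.12236 — 3 statements merged into one kernel-verified Lean document; each statement's English description precedes it below -/
import Mathlib

section
/- For any vectors v, θ, x ∈ ℝ^p and any α ≥ 0: sup over δ ∈ ℝ^p with ‖δ‖₂ ≤ α of ((x + δ)ᵀv − xᵀθ)² equals α²‖v‖₂² + 2α‖v‖₂·|xᵀ(v − θ)| + (xᵀ(v − θ))². Consequently this supremum is bounded below by α²‖v‖₂² + (xᵀ(v − θ))² and bounded above by 2(α²‖v‖₂² + (xᵀ(v − θ))²). -/
open Matrix

noncomputable section

/-- Euclidean (ℓ2) norm of a vector. -/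
def l2norm {p : ℕ} (v : Fin p → ℝ) : ℝ := Real.sqrt (∑ i, v i ^ 2)

lemma l2norm_nonneg {p : ℕ} (v : Fin p → ℝ) : 0 ≤ l2norm v := Real.sqrt_nonneg _

lemma l2norm_sq {p : ℕ} (v : Fin p → ℝ) : l2norm v ^ 2 = ∑ i, v i ^ 2 :=
  Real.sq_sqrt (Finset.sum_nonneg fun i _ => sq_nonneg _)

lemma abs_dot_le {p : ℕ} (δ v : Fin p → ℝ) : |δ ⬝ᵥ v| ≤ l2norm δ * l2norm v := by
  have h := Finset.sum_mul_sq_le_sq_mul_sq Finset.univ δ v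
  have hd : δ ⬝ᵥ v = ∑ i, δ i * v i := rfl
  calc |δ ⬝ᵥ v| = Real.sqrt ((δ ⬝ᵥ v) ^ 2) := (Real.sqrt_sq_eq_abs _).symm
    _ ≤ Real.sqrt ((∑ i, δ i ^ 2) * ∑ i, v i ^ 2) := Real.sqrt_le_sqrt (by rw [hd]; exact h)
    _ = l2norm δ * l2norm v :=
        Real.sqrt_mul (Finset.sum_nonneg fun i _ => sq_nonneg _) _

lemma l2norm_smul {p : ℕ} (s : ℝ) (v : Fin p → ℝ) : l2norm (s • v) = |s| * l2norm v := by
  unfold l2norm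
  have : ∑ i, (s • v) i ^ 2 = s ^ 2 * ∑ i, v i ^ 2 := by
    rw [Finset.mul_sum]; apply Finset.sum_congr rfl; intro i _
    simp [Pi.smul_apply, smul_eq_mul]; ring
  rw [this, Real.sqrt_mul (sq_nonneg s), Real.sqrt_sq_eq_abs]

/-- Remark 3.1 / `remark:arisk`: for any `v, θ, x ∈ ℝ^p` and `α ≥ 0`,
the adversarial supremum `sup_{‖δ‖₂ ≤ α} ((x+δ)ᵀv − xᵀθ)²` equals
`α²‖v‖₂² + 2α‖v‖₂|xᵀ(v−θ)| + (xᵀ(v−θ))²`, and is consequently bounded below by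
`α²‖v‖₂² + (xᵀ(v−θ))²` and above by `2(α²‖v‖₂² + (xᵀ(v−θ))²)`. -/
theorem statement8 (p : ℕ) (v θ x : Fin p → ℝ) (α : ℝ) (hα : 0 ≤ α) :
    sSup {r : ℝ | ∃ δ : Fin p → ℝ, l2norm δ ≤ α ∧ r = ((x + δ) ⬝ᵥ v - x ⬝ᵥ θ) ^ 2} =
        α ^ 2 * l2norm v ^ 2 + 2 * α * l2norm v * |x ⬝ᵥ (v - θ)| + (x ⬝ᵥ (v - θ)) ^ 2 ∧
      α ^ 2 * l2norm v ^ 2 + (x ⬝ᵥ (v - θ)) ^ 2 ≤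
        sSup {r : ℝ | ∃ δ : Fin p → ℝ, l2norm δ ≤ α ∧ r = ((x + δ) ⬝ᵥ v - x ⬝ᵥ θ) ^ 2} ∧
      sSup {r : ℝ | ∃ δ : Fin p → ℝ, l2norm δ ≤ α ∧ r = ((x + δ) ⬝ᵥ v - x ⬝ᵥ θ) ^ 2} ≤
        2 * (α ^ 2 * l2norm v ^ 2 + (x ⬝ᵥ (v - θ)) ^ 2) := by
  set c : ℝ := x ⬝ᵥ (v - θ) with hc
  set n : ℝ := l2norm v with hn
  have hn0 : 0 ≤ n := l2norm_nonneg v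
  set S : Set ℝ := {r : ℝ | ∃ δ : Fin p → ℝ, l2norm δ ≤ α ∧ r = ((x + δ) ⬝ᵥ v - x ⬝ᵥ θ) ^ 2}
    with hS
  have key : ∀ δ : Fin p → ℝ, (x + δ) ⬝ᵥ v - x ⬝ᵥ θ = δ ⬝ᵥ v + c := by
    intro δ
    rw [hc, add_dotProduct, dotProduct_sub]
    ring
  -- upper bound
  have hub : ∀ r ∈ S, r ≤ (α * n + |c|) ^ 2 := by
    rintro r ⟨δ, hδ, rfl⟩
    rw [key]
    have h1 : |δ ⬝ᵥ v + c| ≤ α * n + |c| := by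
      calc |δ ⬝ᵥ v + c| ≤ |δ ⬝ᵥ v| + |c| := abs_add_le _ _
        _ ≤ α * n + |c| := by
            have := abs_dot_le δ v
            have h2 : l2norm δ * l2norm v ≤ α * n := by
              rw [hn]; exact mul_le_mul_of_nonneg_right hδ (l2norm_nonneg v)
            linarith
    calc (δ ⬝ᵥ v + c) ^ 2 = |δ ⬝ᵥ v + c| ^ 2 := (sq_abs _).symm
      _ ≤ (α * n + |c|) ^ 2 := by
          apply pow_le_pow_left₀ (abs_nonneg _) h1
  -- membership of the maximum
  have hmem : (α * n + |c|) ^ 2 ∈ S := by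
    rcases eq_or_lt_of_le hn0 with hn0' | hnpos
    ·
      refine ⟨0, by simp [l2norm, hα], ?_⟩
      rw [key]
      have hv0 : (0 : Fin p → ℝ) ⬝ᵥ v = 0 := zero_dotProduct v
      rw [hv0, zero_add, ← hn0', mul_zero, zero_add, sq_abs]
    · set s : ℝ := (if 0 ≤ c then α else -α) / n with hs
      refine ⟨s • v, ?_, ?_⟩
      · rw [l2norm_smul, hs]
        rw [abs_div]
        have : |(if 0 ≤ c then α else -α)| = α := by
          split <;> simp [abs_of_nonneg hα]
        rw [this, abs_of_pos hnpos, ← hn]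
        rw [div_mul_cancel₀ _ (ne_of_gt hnpos)]
      · rw [key]
        have hvv : v ⬝ᵥ v = n ^ 2 := by
          rw [hn, l2norm_sq]
          simp [dotProduct, sq]
        have hsv : (s • v) ⬝ᵥ v = s * n ^ 2 := by
          rw [smul_dotProduct, hvv]; rfl
        rw [hsv, hs]
        have hne : n ≠ 0 := ne_of_gt hnpos
        split_ifs with h
        · rw [abs_of_nonneg h]
          field_simp
        · rw [abs_of_neg (lt_of_not_ge h)]
          field_simp
          ring
  have hbdd : BddAbove S := ⟨(α * n + |c|) ^ 2, hub⟩
  have hsup : sSup S = (α * n + |c|) ^ 2 :=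
    le_antisymm (Real.sSup_le hub (sq_nonneg _)) (le_csSup hbdd hmem)
  have hexp : (α * n + |c|) ^ 2 = α ^ 2 * n ^ 2 + 2 * α * n * |c| + c ^ 2 := by
    have := sq_abs c
    ring_nf
    nlinarith [sq_abs c]
  refine ⟨by rw [hsup, hexp], ?_, ?_⟩
  · rw [hsup, hexp]
    have : 0 ≤ 2 * α * n * |c| := by positivity
    linarith
  · rw [hsup, hexp]
    nlinarith [sq_nonneg (α * n - |c|), sq_abs c]

end
end

section
/- (Woodbury decomposition of the variance trace terms.) Let n, p ≥ 1, λ > 0, let Σ = Σ_{i=1}^p λᵢvᵢvᵢᵀ be a p×p symmetric positive-definite matrix with λᵢ > 0 and {v₁,…,v_p} an orthonormal basis of ℝ^p, let X ∈ ℝ^{n×p}, and set zᵢ = Xvᵢ/√λᵢ ∈ ℝⁿ and A_{−i} = XXᵀ − λᵢzᵢzᵢᵀ. Then: (i) trace{XΣXᵀ(XXᵀ + nλI)^{-2}} = Σ_{i=1}^p [λᵢ² zᵢᵀ(A_{−i} + nλI)^{-2}zᵢ] / [1 + λᵢ zᵢᵀ(A_{−i} + nλI)^{-1}zᵢ]²;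 and (ii) trace{XXᵀ(XXᵀ + nλI)^{-2}} = Σ_{i=1}^p [λᵢ zᵢᵀ(A_{−i} + nλI)^{-2}zᵢ] / [1 + λᵢ zᵢᵀ(A_{−i} + nλI)^{-1}zᵢ]². -/
open Matrix

noncomputable section

variable {n p : ℕ}

/-- `zᵢ = X vᵢ / √λᵢ`. -/
def zvec (lam : Fin p → ℝ) (v : Fin p → Fin p → ℝ) (X : Matrix (Fin n) (Fin p) ℝ)
    (i : Fin p) : Fin n → ℝ :=
  (Real.sqrt (lam i))⁻¹ • X.mulVec (v i)

/-- `A₋ᵢ = X Xᵀ − λᵢ zᵢ zᵢᵀ`. -/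
def Ami (lam : Fin p → ℝ) (v : Fin p → Fin p → ℝ) (X : Matrix (Fin n) (Fin p) ℝ)
    (i : Fin p) : Matrix (Fin n) (Fin n) ℝ :=
  X * Xᵀ - lam i • vecMulVec (zvec lam v X i) (zvec lam v X i)

/-- `B ↦ B + n λ I`. -/
def addReg (lamreg : ℝ) (B : Matrix (Fin n) (Fin n) ℝ) : Matrix (Fin n) (Fin n) ℝ :=
  B + ((n : ℝ) * lamreg) • (1 : Matrix (Fin n) (Fin n) ℝ)

lemma vmv_mulVec (a b w : Fin n → ℝ) :
    (vecMulVec a b) *ᵥ w = (b ⬝ᵥ w) • a := by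
  ext i
  simp only [mulVec, dotProduct, vecMulVec_apply, Pi.smul_apply, smul_eq_mul, Finset.sum_mul]
  exact Finset.sum_congr rfl fun j _ => by ring

lemma trace_vmv_mul (a b : Fin n → ℝ) (Q : Matrix (Fin n) (Fin n) ℝ) :
    Matrix.trace (vecMulVec a b * Q) = b ⬝ᵥ (Q *ᵥ a) := by
  simp only [Matrix.trace, diag_apply, mul_apply, vecMulVec_apply, dotProduct, mulVec,
    Finset.mul_sum]
  rw [Finset.sum_comm]
  exact Finset.sum_congr rfl fun j _ => Finset.sum_congr rfl fun i _ => by ring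

lemma smul_vmv_psd {la : ℝ} (hla : 0 ≤ la) (z : Fin n → ℝ) :
    (la • vecMulVec z z).PosSemidef := by
  refine Matrix.PosSemidef.of_dotProduct_mulVec_nonneg ?_ ?_
  · ext i j
    simp only [conjTranspose_apply, Matrix.smul_apply, vecMulVec_apply, smul_eq_mul, star_trivial]
    ring
  · intro x
    rw [smul_mulVec, vmv_mulVec, dotProduct_smul, dotProduct_smul]
    have : z ⬝ᵥ x = star x ⬝ᵥ z := by simp [dotProduct, mul_comm]
    rw [smul_eq_mul, smul_eq_mul, this]
    exact mul_nonneg hla (mul_self_nonneg _)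

lemma smul_one_posDef {c : ℝ} (hc : 0 < c) :
    (c • (1 : Matrix (Fin n) (Fin n) ℝ)).PosDef := by
  rw [smul_one_eq_diagonal]
  exact posDef_diagonal_iff.mpr fun _ => hc

lemma dot_symm_mulVec {S : Matrix (Fin n) (Fin n) ℝ} (hS : Sᵀ = S) (z w : Fin n → ℝ) :
    z ⬝ᵥ S *ᵥ w = (S *ᵥ z) ⬝ᵥ w := by
  rw [dotProduct_mulVec]
  conv_rhs => rw [← hS, mulVec_transpose]

lemma key {c : ℝ} (hc : 0 < c) {la : ℝ} (hla : 0 < la)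
    (A : Matrix (Fin n) (Fin n) ℝ) (hA : A.PosSemidef) (z : Fin n → ℝ) :
    z ⬝ᵥ ((((A + la • vecMulVec z z) + c • 1)⁻¹ * ((A + la • vecMulVec z z) + c • 1)⁻¹) *ᵥ z)
      = (z ⬝ᵥ (((A + c • 1)⁻¹ * (A + c • 1)⁻¹) *ᵥ z)) /
        (1 + la * (z ⬝ᵥ (A + c • 1)⁻¹ *ᵥ z)) ^ 2 := by
  set B : Matrix (Fin n) (Fin n) ℝ := A + c • 1 with hBdef
  set M : Matrix (Fin n) (Fin n) ℝ := (A + la • vecMulVec z z) + c • 1 with hMdef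
  have hMB : M = B + la • vecMulVec z z := by rw [hMdef, hBdef]; abel
  have hB : B.PosDef := Matrix.PosDef.posSemidef_add hA (smul_one_posDef hc)
  have hM : M.PosDef := by
    rw [hMB]
    exact Matrix.PosDef.add_posSemidef hB (smul_vmv_psd hla.le z)
  have hBdet : IsUnit B.det := hB.det_pos.ne'.isUnit
  have hMdet : IsUnit M.det := hM.det_pos.ne'.isUnit
  have hBsym : (B⁻¹)ᵀ = B⁻¹ := by
    rw [transpose_nonsing_inv]
    congr 1
    simpa [Matrix.IsHermitian] using hB.isHermitian
  have hMsym : (M⁻¹)ᵀ = M⁻¹ := by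
    rw [transpose_nonsing_inv]
    congr 1
    simpa [Matrix.IsHermitian] using hM.isHermitian
  set s : ℝ := z ⬝ᵥ B⁻¹ *ᵥ z with hs
  have hs0 : 0 ≤ s := by simpa using hB.inv.posSemidef.dotProduct_mulVec_nonneg z
  set d : ℝ := 1 + la * s with hd
  have hd0 : 0 < d := by positivity
  set w : Fin n → ℝ := B⁻¹ *ᵥ z with hw
  have hMw : M *ᵥ w = d • z := by
    rw [hMB, add_mulVec, smul_mulVec, hw, mulVec_mulVec,
      Matrix.mul_nonsing_inv _ hBdet, one_mulVec, vmv_mulVec, ← hs, hd, add_smul, one_smul,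
      smul_smul]
  have hMz : M⁻¹ *ᵥ z = d⁻¹ • w := by
    have h1 : M⁻¹ *ᵥ (M *ᵥ w) = w := by
      rw [mulVec_mulVec, Matrix.nonsing_inv_mul _ hMdet, one_mulVec]
    rw [hMw, mulVec_smul] at h1
    rw [← h1, smul_smul, inv_mul_cancel₀ hd0.ne', one_smul]
  have lhs_eq : z ⬝ᵥ ((M⁻¹ * M⁻¹) *ᵥ z) = d⁻¹ * d⁻¹ * (w ⬝ᵥ w) := by
    rw [← mulVec_mulVec, hMz, mulVec_smul, dotProduct_smul, dot_symm_mulVec hMsym, hMz,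
      smul_dotProduct, smul_eq_mul, smul_eq_mul]
    ring
  have rhs_eq : z ⬝ᵥ ((B⁻¹ * B⁻¹) *ᵥ z) = w ⬝ᵥ w := by
    rw [← mulVec_mulVec, ← hw, dot_symm_mulVec hBsym, ← hw]
  rw [lhs_eq, rhs_eq, pow_two, div_eq_mul_inv, mul_inv]
  ring

lemma sum_vmv_eq_one (v : Fin p → Fin p → ℝ)
    (hv : ∀ i j : Fin p, v i ⬝ᵥ v j = if i = j then (1 : ℝ) else 0) :
    ∑ i, vecMulVec (v i) (v i) = (1 : Matrix (Fin p) (Fin p) ℝ) := by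
  have hVVt : (Matrix.of v) * (Matrix.of v)ᵀ = 1 := by
    ext i j
    simpa [Matrix.mul_apply, dotProduct, Matrix.one_apply] using hv i j
  have hVtV : (Matrix.of v)ᵀ * (Matrix.of v) = 1 := mul_eq_one_comm.mp hVVt
  ext j k
  have h2 := congrFun (congrFun hVtV j) k
  simp only [Matrix.mul_apply, transpose_apply, Matrix.of_apply] at h2
  simpa [Matrix.sum_apply, vecMulVec_apply] using h2

lemma conj_vmv (X : Matrix (Fin n) (Fin p) ℝ) (a b : Fin p → ℝ) :
    X * vecMulVec a b * Xᵀ = vecMulVec (X *ᵥ a) (X *ᵥ b) := by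
  ext i j
  simp only [Matrix.mul_apply, vecMulVec_apply, transpose_apply, mulVec, dotProduct]
  rw [Finset.sum_mul_sum, Finset.sum_comm]
  refine Finset.sum_congr rfl fun l _ => ?_
  rw [Finset.sum_mul]
  exact Finset.sum_congr rfl fun k _ => by ring

lemma smul_vmv_z {la : ℝ} (hla : 0 < la) (u : Fin n → ℝ) :
    la • vecMulVec ((Real.sqrt la)⁻¹ • u) ((Real.sqrt la)⁻¹ • u) = vecMulVec u u := by
  have hs : Real.sqrt la ≠ 0 := (Real.sqrt_pos.mpr hla).ne'
  have hm : Real.sqrt la * Real.sqrt la = la := Real.mul_self_sqrt hla.le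
  ext i j
  simp only [Matrix.smul_apply, vecMulVec_apply, Pi.smul_apply, smul_eq_mul]
  field_simp
  rw [Real.sq_sqrt hla.le]

lemma XXt_eq (lam : Fin p → ℝ) (hlampos : ∀ i, 0 < lam i)
    (v : Fin p → Fin p → ℝ)
    (hv : ∀ i j : Fin p, v i ⬝ᵥ v j = if i = j then (1 : ℝ) else 0)
    (X : Matrix (Fin n) (Fin p) ℝ) :
    X * Xᵀ = ∑ i, lam i • vecMulVec (zvec lam v X i) (zvec lam v X i) := by
  have h1 : X * Xᵀ = X * (∑ i, vecMulVec (v i) (v i)) * Xᵀ := by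
    rw [sum_vmv_eq_one v hv, Matrix.mul_one]
  rw [h1, Matrix.mul_sum, Matrix.sum_mul]
  refine Finset.sum_congr rfl fun i _ => ?_
  rw [conj_vmv, zvec, ← smul_vmv_z (hlampos i) (X *ᵥ v i)]

lemma XSXt_eq (lam : Fin p → ℝ) (hlampos : ∀ i, 0 < lam i)
    (v : Fin p → Fin p → ℝ) (X : Matrix (Fin n) (Fin p) ℝ) :
    X * (∑ i, lam i • vecMulVec (v i) (v i)) * Xᵀ
      = ∑ i, (lam i) ^ 2 • vecMulVec (zvec lam v X i) (zvec lam v X i) := by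
  rw [Matrix.mul_sum, Matrix.sum_mul]
  refine Finset.sum_congr rfl fun i _ => ?_
  rw [Matrix.mul_smul, Matrix.smul_mul, conj_vmv, zvec, ← smul_vmv_z (hlampos i) (X *ᵥ v i),
    smul_smul, pow_two]

lemma Ami_psd (lam : Fin p → ℝ) (hlampos : ∀ i, 0 < lam i)
    (v : Fin p → Fin p → ℝ)
    (hv : ∀ i j : Fin p, v i ⬝ᵥ v j = if i = j then (1 : ℝ) else 0)
    (X : Matrix (Fin n) (Fin p) ℝ) (i : Fin p) :
    (Ami lam v X i).PosSemidef := by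
  have h : Ami lam v X i
      = ∑ j ∈ Finset.univ.erase i, lam j • vecMulVec (zvec lam v X j) (zvec lam v X j) := by
    rw [Ami, XXt_eq lam hlampos v hv X, Finset.sum_erase_eq_sub (Finset.mem_univ i)]
  rw [h]
  refine Finset.sum_induction _ _ (fun a b ha hb => ha.add hb) Matrix.PosSemidef.zero ?_
  exact fun j _ => smul_vmv_psd (hlampos j).le _

/-- Woodbury decomposition of the variance trace terms, Eq. (17):
with `Σ = Σᵢ λᵢ vᵢ vᵢᵀ`, `zᵢ = X vᵢ/√λᵢ` and `A₋ᵢ = X Xᵀ − λᵢ zᵢ zᵢᵀ`,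
(i) `tr{X Σ Xᵀ (X Xᵀ + nλI)⁻²} = Σᵢ λᵢ² zᵢᵀ(A₋ᵢ+nλI)⁻² zᵢ / (1 + λᵢ zᵢᵀ(A₋ᵢ+nλI)⁻¹ zᵢ)²`, and
(ii) `tr{X Xᵀ (X Xᵀ + nλI)⁻²} = Σᵢ λᵢ zᵢᵀ(A₋ᵢ+nλI)⁻² zᵢ / (1 + λᵢ zᵢᵀ(A₋ᵢ+nλI)⁻¹ zᵢ)²`. -/
theorem statement16 (lamreg : ℝ) (hlam : 0 < lamreg)
    (lam : Fin p → ℝ) (hlampos : ∀ i, 0 < lam i)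
    (v : Fin p → Fin p → ℝ)
    (hv : ∀ i j : Fin p, v i ⬝ᵥ v j = if i = j then (1 : ℝ) else 0)
    (X : Matrix (Fin n) (Fin p) ℝ) :
    Matrix.trace (X * (∑ i, lam i • vecMulVec (v i) (v i)) * Xᵀ *
        ((addReg lamreg (X * Xᵀ))⁻¹ * (addReg lamreg (X * Xᵀ))⁻¹)) =
      (∑ i : Fin p,
        lam i ^ 2 * (zvec lam v X i ⬝ᵥ
            ((addReg lamreg (Ami lam v X i))⁻¹ *
              (addReg lamreg (Ami lam v X i))⁻¹).mulVec (zvec lam v X i)) /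
          (1 + lam i * (zvec lam v X i ⬝ᵥ
            (addReg lamreg (Ami lam v X i))⁻¹.mulVec (zvec lam v X i))) ^ 2) ∧
    Matrix.trace (X * Xᵀ *
        ((addReg lamreg (X * Xᵀ))⁻¹ * (addReg lamreg (X * Xᵀ))⁻¹)) =
      (∑ i : Fin p,
        lam i * (zvec lam v X i ⬝ᵥ
            ((addReg lamreg (Ami lam v X i))⁻¹ *
              (addReg lamreg (Ami lam v X i))⁻¹).mulVec (zvec lam v X i)) /
          (1 + lam i * (zvec lam v X i ⬝ᵥ
            (addReg lamreg (Ami lam v X i))⁻¹.mulVec (zvec lam v X i))) ^ 2) := by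
  rcases Nat.eq_zero_or_pos n with hn | hn
  · subst hn
    constructor <;> simp [Matrix.trace, dotProduct]
  · have hc : 0 < (n : ℝ) * lamreg := by positivity
    -- per-index key identity
    have hkey : ∀ i : Fin p,
        zvec lam v X i ⬝ᵥ
            (((addReg lamreg (X * Xᵀ))⁻¹ * (addReg lamreg (X * Xᵀ))⁻¹) *ᵥ zvec lam v X i)
          = (zvec lam v X i ⬝ᵥ
              (((addReg lamreg (Ami lam v X i))⁻¹ * (addReg lamreg (Ami lam v X i))⁻¹) *ᵥ
                zvec lam v X i)) /
            (1 + lam i * (zvec lam v X i ⬝ᵥ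
              (addReg lamreg (Ami lam v X i))⁻¹ *ᵥ zvec lam v X i)) ^ 2 := by
      intro i
      have hM : addReg lamreg (X * Xᵀ)
          = (Ami lam v X i + lam i • vecMulVec (zvec lam v X i) (zvec lam v X i))
            + ((n : ℝ) * lamreg) • 1 := by
        rw [addReg, Ami]
        abel
      have hB : addReg lamreg (Ami lam v X i)
          = Ami lam v X i + ((n : ℝ) * lamreg) • 1 := rfl
      rw [hM, hB]
      exact key hc (hlampos i) _ (Ami_psd lam hlampos v hv X i) _
    have htr : ∀ (P : Fin p → Matrix (Fin n) (Fin n) ℝ) (Q : Matrix (Fin n) (Fin n) ℝ),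
        Matrix.trace ((∑ i, P i) * Q) = ∑ i, Matrix.trace (P i * Q) := by
      intro P Q
      rw [Finset.sum_mul, Matrix.trace_sum]
    constructor
    · rw [XSXt_eq lam hlampos v X, htr]
      refine Finset.sum_congr rfl fun i _ => ?_
      rw [smul_mul_assoc, Matrix.trace_smul, trace_vmv_mul, smul_eq_mul, hkey i, mul_div_assoc]
    · nth_rewrite 1 [XXt_eq lam hlampos v hv X]
      rw [htr]
      refine Finset.sum_congr rfl fun i _ => ?_
      rw [smul_mul_assoc, Matrix.trace_smul, trace_vmv_mul, smul_eq_mul, hkey i, mul_div_assoc]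

end
end

section
/- (Exact bias decomposition under random signs.) Let n, p ≥ 1, λ > 0, Σ = VΛVᵀ a p×p symmetric positive-definite matrix with eigenvalues λᵢ > 0 and orthonormal eigenvector matrix V = [v₁,…,v_p], X ∈ ℝ^{n×p}, zᵢ = Xvᵢ/√λᵢ, A_{−i} = XXᵀ − λᵢzᵢzᵢᵀ, and M = (XXᵀ + nλI)^{-1}. Let t ∈ ℝ^p be fixed, let s be a random vector of independent uniform ±1 signs, and set θ = V(s ⊙ t). Then: (i) E_s[θᵀ(I − XᵀMX)Σ(I − XᵀMX)θ] = Σ_{i=1}^p tᵢ²·[λᵢ(1 − λᵢzᵢᵀMzᵢ)² + Σ_{j≠i} λᵢλⱼ²(zᵢᵀMzⱼ)²]; and (ii) for every i, 1 − λᵢzᵢᵀMzᵢ = 1/(1 + λᵢzᵢᵀ(A_{−i} + nλI)^{-1}zᵢ), so in particular E_s[θᵀ(I − XᵀMX)Σ(I − XᵀMX)θ] ≥ Σᵢ tᵢ²λᵢ/(1 + λᵢzᵢᵀ(A_{−i} + nλI)^{-1}zᵢ)². -/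
open Matrix

noncomputable section

variable {n p : ℕ}

/-- a ±1 sign from a boolean -/
def sgn (b : Bool) : ℝ := if b then 1 else -1

lemma sgn_mul_self (b : Bool) : sgn b * sgn b = 1 := by cases b <;> simp [sgn]

lemma sgn_not (b : Bool) : sgn (!b) = - sgn b := by cases b <;> simp [sgn]

lemma sum_sgn_mul (j k : Fin p) :
    ∑ sb : Fin p → Bool, sgn (sb j) * sgn (sb k) =
      if j = k then (2:ℝ)^p else 0 := by
  by_cases h : j = k
  · subst h
    simp [sgn_mul_self, Finset.card_univ]
  · simp only [h, if_false]
    apply Finset.sum_involution (fun sb _ => Function.update sb j (!(sb j)))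
      (fun sb _ => by
        rw [Function.update_of_ne (Ne.symm h), Function.update_self, sgn_not]; ring)
      (fun sb _ hne heq => by
        have := congrFun heq j; simp at this)
      (fun sb _ => Finset.mem_univ _)
      (fun sb _ => by
        funext x
        by_cases hx : x = j
        · subst hx; simp
        · simp [Function.update_of_ne hx])

lemma quad_conj {q r : ℕ} {S : Matrix (Fin q) (Fin q) ℝ} (A : Matrix (Fin q) (Fin r) ℝ)
    (c : Fin r → ℝ) :
    (A.mulVec c) ⬝ᵥ S.mulVec (A.mulVec c) = c ⬝ᵥ (Aᵀ * S * A).mulVec c := by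
  conv_rhs => rw [← mulVec_mulVec, ← mulVec_mulVec, dotProduct_mulVec, vecMul_transpose]

lemma vecMulVec_mulVec' (a b x : Fin n → ℝ) :
    (vecMulVec a b).mulVec x = (b ⬝ᵥ x) • a := by
  ext i
  simp only [mulVec, dotProduct, vecMulVec_apply, Pi.smul_apply, smul_eq_mul]
  rw [Finset.sum_mul]
  exact Finset.sum_congr rfl (fun k _ => by ring)

lemma posSemidef_vecMulVec (a : Fin n → ℝ) : (vecMulVec a a).PosSemidef := by
  refine posSemidef_iff_dotProduct_mulVec.mpr ⟨?_, ?_⟩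
  · ext i j
    simp [vecMulVec_apply, conjTranspose_apply, mul_comm]
  · intro x
    rw [vecMulVec_mulVec']
    simp only [star_trivial, dotProduct_smul]
    rw [smul_eq_mul, dotProduct_comm]
    exact mul_self_nonneg _

lemma addReg_posDef (lamreg : ℝ) (hlam : 0 < lamreg)
    {B : Matrix (Fin n) (Fin n) ℝ} (hB : B.PosSemidef) :
    (addReg lamreg B).PosDef := by
  rcases Nat.eq_zero_or_pos n with h0 | hn
  · subst h0
    refine ⟨?_, fun x hx => absurd (Subsingleton.elim x 0) hx⟩
    exact hB.isHermitian.add (by ext i j; exact absurd i.2 (by omega))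
  · apply Matrix.PosDef.posSemidef_add hB
    refine posDef_iff_dotProduct_mulVec.mpr ⟨?_, ?_⟩
    · ext i j
      simp [conjTranspose_apply, Matrix.one_apply, Matrix.smul_apply]
      split <;> simp_all [eq_comm]
    · intro x hx
      have hxx : 0 < x ⬝ᵥ x := by
        rcases Function.ne_iff.mp hx with ⟨i, hi⟩
        have : x i * x i ≤ ∑ j, x j * x j :=
          Finset.single_le_sum (fun j _ => mul_self_nonneg (x j)) (Finset.mem_univ i)
        have h2 : 0 < x i * x i := mul_self_pos.mpr hi
        exact lt_of_lt_of_le h2 this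
      have : (((n : ℝ) * lamreg) • (1 : Matrix (Fin n) (Fin n) ℝ)).mulVec x
          = ((n : ℝ) * lamreg) • x := by
        rw [smul_mulVec, one_mulVec]
      rw [this]
      simp only [star_trivial, dotProduct_smul, smul_eq_mul]
      have hc : 0 < (n : ℝ) * lamreg := by positivity
      exact mul_pos hc hxx

lemma sum_matrix_mulVec {q : ℕ} {ι : Type*} (s : Finset ι)
    (A : ι → Matrix (Fin q) (Fin q) ℝ) (x : Fin q → ℝ) :
    (∑ j ∈ s, A j).mulVec x = ∑ j ∈ s, (A j).mulVec x := by
  ext i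
  simp only [mulVec, dotProduct, Matrix.sum_apply, Finset.sum_apply, Finset.sum_mul]
  rw [Finset.sum_comm]

lemma dotProduct_sum' {q : ℕ} {ι : Type*} (s : Finset ι) (x : Fin q → ℝ)
    (y : ι → Fin q → ℝ) : x ⬝ᵥ (∑ j ∈ s, y j) = ∑ j ∈ s, x ⬝ᵥ y j := by
  simp [dotProduct, Finset.sum_apply, Finset.mul_sum]
  rw [Finset.sum_comm]

lemma posSemidef_sum {q : ℕ} {ι : Type*} (s : Finset ι)
    (A : ι → Matrix (Fin q) (Fin q) ℝ) (h : ∀ j ∈ s, (A j).PosSemidef) :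
    (∑ j ∈ s, A j).PosSemidef :=
  Finset.sum_induction A _ (fun _ _ ha hb => ha.add hb) Matrix.PosSemidef.zero h

lemma diag_conj {q r : ℕ} (A : Matrix (Fin q) (Fin r) ℝ) (S : Matrix (Fin q) (Fin q) ℝ)
    (i : Fin r) :
    (Aᵀ * S * A) i i = (fun k => A k i) ⬝ᵥ S.mulVec (fun k => A k i) := by
  simp only [mul_apply, transpose_apply, dotProduct, mulVec, Finset.sum_mul, Finset.mul_sum]
  rw [Finset.sum_comm]
  exact Finset.sum_congr rfl fun a _ => Finset.sum_congr rfl fun b _ => by ring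

/-- exact bias decomposition under random signs: with
`M = (XXᵀ + nλI)⁻¹`, `θ = V (s ⊙ t)` for independent uniform signs `s`, and
`Σ = V Λ Vᵀ`:
(i) `E_s[θᵀ(I − XᵀMX) Σ (I − XᵀMX)θ]
      = Σᵢ tᵢ² (λᵢ(1 − λᵢ zᵢᵀ M zᵢ)² + Σ_{j≠i} λᵢ λⱼ² (zᵢᵀ M zⱼ)²)`,
(ii) `1 − λᵢ zᵢᵀ M zᵢ = 1/(1 + λᵢ zᵢᵀ (A₋ᵢ + nλI)⁻¹ zᵢ)`, and consequently
(iii) `E_s[⋯] ≥ Σᵢ tᵢ² λᵢ / (1 + λᵢ zᵢᵀ (A₋ᵢ + nλI)⁻¹ zᵢ)²`. -/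
theorem statement17 (lamreg : ℝ) (hlam : 0 < lamreg)
    (lam : Fin p → ℝ) (hlampos : ∀ i, 0 < lam i)
    (V : Matrix (Fin p) (Fin p) ℝ) (hV : Vᵀ * V = 1)
    (X : Matrix (Fin n) (Fin p) ℝ) (t : Fin p → ℝ) :
    -- abbreviations
    (fun (v : Fin p → Fin p → ℝ) (Sig : Matrix (Fin p) (Fin p) ℝ)
        (Mreg : Matrix (Fin n) (Fin n) ℝ)
        (z : Fin p → Fin n → ℝ) (quad : (Fin p → ℝ) → ℝ) =>
      ((2 : ℝ) ^ p)⁻¹ *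
          (∑ sb : Fin p → Bool, quad (V.mulVec (fun j => sgn (sb j) * t j))) =
        (∑ i : Fin p, t i ^ 2 *
          (lam i * (1 - lam i * (z i ⬝ᵥ Mreg.mulVec (z i))) ^ 2 +
            ∑ j : Fin p, if j ≠ i then
              lam i * lam j ^ 2 * (z i ⬝ᵥ Mreg.mulVec (z j)) ^ 2 else 0)) ∧
      (∀ i : Fin p, 1 - lam i * (z i ⬝ᵥ Mreg.mulVec (z i)) =
        (1 + lam i * (z i ⬝ᵥ (addReg lamreg (Ami lam v X i))⁻¹.mulVec (z i)))⁻¹) ∧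
      (∑ i : Fin p, t i ^ 2 * lam i /
          (1 + lam i * (z i ⬝ᵥ (addReg lamreg (Ami lam v X i))⁻¹.mulVec (z i))) ^ 2) ≤
        ((2 : ℝ) ^ p)⁻¹ *
          (∑ sb : Fin p → Bool, quad (V.mulVec (fun j => sgn (sb j) * t j))))
      -- instantiations of the abbreviations
      (fun i j => V j i)
      (∑ i, lam i • vecMulVec (fun j => V j i) (fun j => V j i))
      ((addReg lamreg (X * Xᵀ))⁻¹)
      (zvec lam (fun i j => V j i) X)
      (fun θv =>
        (θv - (Xᵀ * (addReg lamreg (X * Xᵀ))⁻¹ * X).mulVec θv) ⬝ᵥ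
          (∑ i, lam i • vecMulVec (fun j => V j i) (fun j => V j i)).mulVec
            (θv - (Xᵀ * (addReg lamreg (X * Xᵀ))⁻¹ * X).mulVec θv)) := by
  beta_reduce
  set v : Fin p → Fin p → ℝ := fun i j => V j i with hv
  set z : Fin p → Fin n → ℝ := zvec lam v X with hz
  set Sig : Matrix (Fin p) (Fin p) ℝ := ∑ i, lam i • vecMulVec (v i) (v i) with hSig
  set Mreg : Matrix (Fin n) (Fin n) ℝ := (addReg lamreg (X * Xᵀ))⁻¹ with hMreg
  -- basic facts
  have hsqpos : ∀ i, (0:ℝ) < Real.sqrt (lam i) := fun i => Real.sqrt_pos.mpr (hlampos i)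
  have hsq : ∀ i, Real.sqrt (lam i) * Real.sqrt (lam i) = lam i :=
    fun i => Real.mul_self_sqrt (hlampos i).le
  have hXv : ∀ i, X.mulVec (v i) = Real.sqrt (lam i) • z i := by
    intro i
    rw [hz]; show _ = Real.sqrt (lam i) • zvec lam v X i
    rw [zvec, smul_smul, mul_inv_cancel₀ (hsqpos i).ne', one_smul]
  have hcol : ∀ i j, v i ⬝ᵥ v j = if i = j then (1:ℝ) else 0 := by
    intro i j
    have := congrFun (congrFun hV i) j
    simpa [mul_apply, dotProduct, Matrix.one_apply, hv] using this
  have hVVt : V * Vᵀ = 1 := mul_eq_one_comm.mp hV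
  -- XXᵀ decomposition
  have hvmv : ∀ j, lam j • vecMulVec (z j) (z j) = vecMulVec (X.mulVec (v j)) (X.mulVec (v j)) := by
    intro j
    rw [hXv]
    ext a b
    simp only [Matrix.smul_apply, vecMulVec_apply, Pi.smul_apply, smul_eq_mul]
    linear_combination (-(z j a * z j b)) * Real.sq_sqrt (hlampos j).le
  have hAAt : ∀ (A : Matrix (Fin n) (Fin p) ℝ),
      A * Aᵀ = ∑ j, vecMulVec (fun a => A a j) (fun a => A a j) := by
    intro A
    ext a b
    simp [mul_apply, Matrix.sum_apply, vecMulVec_apply]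
  have hdecomp : X * Xᵀ = ∑ j, vecMulVec (X.mulVec (v j)) (X.mulVec (v j)) := by
    have hXV : X * Xᵀ = (X * V) * (X * V)ᵀ := by
      rw [transpose_mul, ← Matrix.mul_assoc, Matrix.mul_assoc X V Vᵀ, hVVt, Matrix.mul_one]
    rw [hXV, hAAt]
    refine Finset.sum_congr rfl fun j _ => ?_
    have : (fun a => (X * V) a j) = X.mulVec (v j) := by
      funext a
      simp [mul_apply, mulVec, dotProduct, hv]
    rw [this]
  have hXXt : X * Xᵀ = ∑ j, lam j • vecMulVec (z j) (z j) := by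
    rw [hdecomp]; exact Finset.sum_congr rfl fun j _ => (hvmv j).symm
  have hXXtpsd : (X * Xᵀ).PosSemidef := by
    rw [hdecomp]
    exact posSemidef_sum _ _ (fun j _ => posSemidef_vecMulVec _)
  have hpd : (addReg lamreg (X * Xᵀ)).PosDef := addReg_posDef lamreg hlam hXXtpsd
  have hdet : IsUnit (addReg lamreg (X * Xᵀ)).det := hpd.det_pos.ne'.isUnit
  have hMl : Mreg * addReg lamreg (X * Xᵀ) = 1 := by rw [hMreg]; exact nonsing_inv_mul _ hdet
  have hMr : addReg lamreg (X * Xᵀ) * Mreg = 1 := by rw [hMreg]; exact mul_nonsing_inv _ hdet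
  have hAsymm : (addReg lamreg (X * Xᵀ))ᵀ = addReg lamreg (X * Xᵀ) := by
    rw [addReg, transpose_add, transpose_smul, transpose_one, transpose_mul, transpose_transpose]
  have hMsymm : Mregᵀ = Mreg := by
    rw [hMreg, transpose_nonsing_inv, hAsymm]
  have hsymmdot : ∀ a b, a ⬝ᵥ Mreg.mulVec b = b ⬝ᵥ Mreg.mulVec a := by
    intro a b
    rw [dotProduct_mulVec, ← mulVec_transpose, hMsymm, dotProduct_comm]
  -- part (ii)
  have part2 : ∀ i : Fin p, 1 - lam i * (z i ⬝ᵥ Mreg.mulVec (z i)) =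
      (1 + lam i * (z i ⬝ᵥ (addReg lamreg (Ami lam v X i))⁻¹.mulVec (z i)))⁻¹ := by
    intro i
    set A := addReg lamreg (Ami lam v X i) with hA
    have hAmipsd : (Ami lam v X i).PosSemidef := by
      have : Ami lam v X i = ∑ j ∈ Finset.univ.erase i, lam j • vecMulVec (z j) (z j) := by
        rw [Ami, hXXt, ← hz]
        rw [← Finset.add_sum_erase Finset.univ _ (Finset.mem_univ i)]
        abel
      rw [this]
      refine posSemidef_sum _ _ (fun j _ => ?_)
      rw [hvmv j]
      exact posSemidef_vecMulVec _
    have hApd : A.PosDef := addReg_posDef lamreg hlam hAmipsd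
    have hAdet : IsUnit A.det := hApd.det_pos.ne'.isUnit
    set u : ℝ := z i ⬝ᵥ A⁻¹.mulVec (z i) with hu
    have hunn : 0 ≤ u := by
      have := hApd.inv.posSemidef.dotProduct_mulVec_nonneg (z i)
      simpa [hu] using this
    have hpos : (0:ℝ) < 1 + lam i * u := by nlinarith [hlampos i]
    have hXA : addReg lamreg (X * Xᵀ) = A + lam i • vecMulVec (z i) (z i) := by
      rw [hA, addReg, addReg, Ami, ← hz]
      abel
    have hAinv : A.mulVec (A⁻¹.mulVec (z i)) = z i := by
      rw [mulVec_mulVec, mul_nonsing_inv _ hAdet, one_mulVec]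
    have hMz : Mreg.mulVec (z i) = (1 + lam i * u)⁻¹ • (A⁻¹.mulVec (z i)) := by
      have key : (addReg lamreg (X * Xᵀ)).mulVec ((1 + lam i * u)⁻¹ • (A⁻¹.mulVec (z i)))
          = z i := by
        rw [mulVec_smul, hXA, add_mulVec, hAinv, smul_mulVec, vecMulVec_mulVec', ← hu]
        rw [smul_smul]
        ext k
        simp only [Pi.smul_apply, Pi.add_apply, smul_eq_mul]
        field_simp
      calc Mreg.mulVec (z i)
          = Mreg.mulVec ((addReg lamreg (X * Xᵀ)).mulVec
              ((1 + lam i * u)⁻¹ • (A⁻¹.mulVec (z i)))) := by rw [key]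
        _ = (1 + lam i * u)⁻¹ • (A⁻¹.mulVec (z i)) := by
            rw [mulVec_mulVec, hMl, one_mulVec]
    have hzMz : z i ⬝ᵥ Mreg.mulVec (z i) = (1 + lam i * u)⁻¹ * u := by
      rw [hMz, dotProduct_smul, smul_eq_mul, ← hu]
    rw [hzMz]
    field_simp
    ring
  -- part (i)
  set N : Matrix (Fin p) (Fin p) ℝ := Xᵀ * Mreg * X with hN
  set W : Matrix (Fin p) (Fin p) ℝ := (1 - N) * V with hW
  set R : Matrix (Fin p) (Fin p) ℝ := Wᵀ * Sig * W with hR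
  have hDD : ∀ i j, v j ⬝ᵥ ((1 - N).mulVec (v i)) =
      (if j = i then (1:ℝ) else 0)
        - Real.sqrt (lam i) * Real.sqrt (lam j) * (z j ⬝ᵥ Mreg.mulVec (z i)) := by
    intro i j
    rw [sub_mulVec, one_mulVec, dotProduct_sub, hcol]
    congr 1
    rw [hN, ← mulVec_mulVec, ← mulVec_mulVec, dotProduct_mulVec (v j) Xᵀ, vecMul_transpose,
      hXv, hXv, mulVec_smul, dotProduct_smul, smul_dotProduct]
    simp only [smul_eq_mul]
    ring
  have hcolW : ∀ i, (fun k => W k i) = (1 - N).mulVec (v i) := by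
    intro i
    funext k
    rw [hW]
    simp only [mul_apply, mulVec, dotProduct, hv]
  have hRdiag : ∀ i, R i i =
      lam i * (1 - lam i * (z i ⬝ᵥ Mreg.mulVec (z i))) ^ 2 +
        ∑ j : Fin p, if j ≠ i then
          lam i * lam j ^ 2 * (z i ⬝ᵥ Mreg.mulVec (z j)) ^ 2 else 0 := by
    intro i
    rw [hR, diag_conj, hcolW]
    set w : Fin p → ℝ := (1 - N).mulVec (v i) with hw
    have hSw : Sig.mulVec w = ∑ j, (lam j * (v j ⬝ᵥ w)) • v j := by
      rw [hSig, sum_matrix_mulVec]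
      refine Finset.sum_congr rfl fun j _ => ?_
      rw [smul_mulVec, vecMulVec_mulVec', smul_smul]
    have hwSw : w ⬝ᵥ Sig.mulVec w = ∑ j, lam j * (v j ⬝ᵥ w) ^ 2 := by
      rw [hSw, dotProduct_sum']
      refine Finset.sum_congr rfl fun j _ => ?_
      rw [dotProduct_smul, smul_eq_mul, dotProduct_comm]
      ring
    rw [hwSw]
    have hsplit := Finset.add_sum_erase Finset.univ
      (fun j => lam j * (v j ⬝ᵥ w) ^ 2) (Finset.mem_univ i)
    rw [← hsplit]
    congr 1
    · simp only [hw, hDD, if_pos rfl, if_true]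
      rw [hsq i]
    · rw [← Finset.sum_filter, Finset.filter_ne']
      refine Finset.sum_congr rfl fun j hj => ?_
      have hji : j ≠ i := Finset.ne_of_mem_erase hj
      simp only [hw, hDD, if_neg hji]
      rw [hsymmdot (z j) (z i), zero_sub, neg_sq, mul_pow, mul_pow,
        Real.sq_sqrt (hlampos i).le, Real.sq_sqrt (hlampos j).le]
      ring
  have hquad : ∀ c : Fin p → ℝ,
      ((V.mulVec c - N.mulVec (V.mulVec c)) ⬝ᵥ Sig.mulVec (V.mulVec c - N.mulVec (V.mulVec c)))
        = c ⬝ᵥ R.mulVec c := by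
    intro c
    have h1 : V.mulVec c - N.mulVec (V.mulVec c) = W.mulVec c := by
      rw [hW]
      conv_rhs => rw [← mulVec_mulVec, sub_mulVec, one_mulVec]
    rw [h1, hR]
    exact quad_conj W c
  have part1 : ((2 : ℝ) ^ p)⁻¹ *
      (∑ sb : Fin p → Bool,
        ((V.mulVec (fun j => sgn (sb j) * t j) -
            N.mulVec (V.mulVec (fun j => sgn (sb j) * t j))) ⬝ᵥ
          Sig.mulVec (V.mulVec (fun j => sgn (sb j) * t j) -
            N.mulVec (V.mulVec (fun j => sgn (sb j) * t j))))) =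
      ∑ i : Fin p, t i ^ 2 *
        (lam i * (1 - lam i * (z i ⬝ᵥ Mreg.mulVec (z i))) ^ 2 +
          ∑ j : Fin p, if j ≠ i then
            lam i * lam j ^ 2 * (z i ⬝ᵥ Mreg.mulVec (z j)) ^ 2 else 0) := by
    have hsum : ∑ sb : Fin p → Bool,
        ((fun j => sgn (sb j) * t j) ⬝ᵥ R.mulVec (fun j => sgn (sb j) * t j)) =
        (2:ℝ)^p * ∑ i : Fin p, t i ^ 2 * R i i := by
      have expand : ∀ sb : Fin p → Bool,
          ((fun j => sgn (sb j) * t j) ⬝ᵥ R.mulVec (fun j => sgn (sb j) * t j)) =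
          ∑ j, ∑ k, (t j * R j k * t k) * (sgn (sb j) * sgn (sb k)) := by
        intro sb
        simp only [dotProduct, mulVec, Finset.mul_sum]
        exact Finset.sum_congr rfl fun j _ => Finset.sum_congr rfl fun k _ => by ring
      calc ∑ sb : Fin p → Bool,
            ((fun j => sgn (sb j) * t j) ⬝ᵥ R.mulVec (fun j => sgn (sb j) * t j))
          = ∑ sb : Fin p → Bool, ∑ j, ∑ k, (t j * R j k * t k) * (sgn (sb j) * sgn (sb k)) :=
            Finset.sum_congr rfl fun sb _ => expand sb
        _ = ∑ j, ∑ k, ∑ sb : Fin p → Bool, (t j * R j k * t k) * (sgn (sb j) * sgn (sb k)) := by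
            rw [Finset.sum_comm]
            exact Finset.sum_congr rfl fun j _ => Finset.sum_comm
        _ = ∑ j, ∑ k, (t j * R j k * t k) * (if j = k then (2:ℝ)^p else 0) := by
            refine Finset.sum_congr rfl fun j _ => Finset.sum_congr rfl fun k _ => ?_
            rw [← Finset.mul_sum, sum_sgn_mul]
        _ = ∑ j, (t j * R j j * t j) * (2:ℝ)^p := by
            refine Finset.sum_congr rfl fun j _ => ?_
            rw [Finset.sum_eq_single j]
            · simp
            · intro k _ hk; simp [Ne.symm hk]
            · intro h; exact absurd (Finset.mem_univ j) h
        _ = (2:ℝ)^p * ∑ i : Fin p, t i ^ 2 * R i i := by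
            rw [Finset.mul_sum]
            exact Finset.sum_congr rfl fun j _ => by ring
    calc ((2 : ℝ) ^ p)⁻¹ * _
        = ((2 : ℝ) ^ p)⁻¹ * ∑ sb : Fin p → Bool,
            ((fun j => sgn (sb j) * t j) ⬝ᵥ R.mulVec (fun j => sgn (sb j) * t j)) := by
          congr 1
          exact Finset.sum_congr rfl fun sb _ => hquad _
      _ = ((2 : ℝ) ^ p)⁻¹ * ((2:ℝ)^p * ∑ i : Fin p, t i ^ 2 * R i i) := by rw [hsum]
      _ = ∑ i : Fin p, t i ^ 2 * R i i := by
          rw [← mul_assoc, inv_mul_cancel₀ (by positivity), one_mul]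
      _ = _ := Finset.sum_congr rfl fun i _ => by rw [hRdiag]
  refine ⟨part1, part2, ?_⟩
  rw [part1]
  refine Finset.sum_le_sum fun i _ => ?_
  have h2 := part2 i
  have hterm : t i ^ 2 * lam i /
      (1 + lam i * (z i ⬝ᵥ (addReg lamreg (Ami lam v X i))⁻¹.mulVec (z i))) ^ 2 =
      t i ^ 2 * (lam i * (1 - lam i * (z i ⬝ᵥ Mreg.mulVec (z i))) ^ 2) := by
    rw [h2, div_eq_mul_inv, ← inv_pow]
    ring
  rw [hterm]
  have hnn : 0 ≤ ∑ j : Fin p, if j ≠ i then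
      lam i * lam j ^ 2 * (z i ⬝ᵥ Mreg.mulVec (z j)) ^ 2 else 0 := by
    refine Finset.sum_nonneg fun j _ => ?_
    split
    · exact mul_nonneg (mul_nonneg (hlampos i).le (sq_nonneg _)) (sq_nonneg _)
    · exact le_refl 0
  nlinarith [sq_nonneg (t i)]

end
end
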